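/- Let N ≥ 2 and for each i ∈ {1,…,N} let 𝒳_i be a nonempty finite type. For each i let C_i ⊆ {1,…,i−1} and C̄_i ⊆ {1,…,i−1} be context sets, let p_i(x_i | x_{C_i}) be a conditional probability mass function (nonnegative and summing to 1 over x_i ∈ 𝒳_i for every configuration x_{C_i}), and let q_i(x_i | x_{C̄_i}) be a strictly positive conditional probability mass function. Define the joint pmfs p(x_1,…,x_N) = ∏_{i=1}^N p_i(x_i | x_{C_i}) and q(x_1,…,x_N) = ∏_{i=1}^N q_i(x_i | x_{C̄_i}). Then D(p ‖ q) = Σ_{i=1}^N Σ_{x_{C_i ∪ C̄_i}} p_{C_i ∪ C̄_i}(x_{C_i ∪ C̄_i}) · D( p_i(· | x_{C_i}) ‖ q_i(· | x_{C̄_i}) ), where p_{C_i ∪ C̄_i} denotes the marginal of p on the coordinates in C_i ∪ C̄_i. -/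

import Mathlib

open scoped Classical BigOperators

/-- Kullback–Leibler divergence between two pmfs on a finite type,
with the convention `0 * log (0 / v x) = 0` (automatic since `0 * r = 0` in `ℝ`). -/
noncomputable def klDiv {α : Type*} [Fintype α] (u v : α → ℝ) : ℝ :=
  ∑ x, u x * Real.log (u x / v x)

/-- Extension of a configuration on the coordinates in `S` to a full configuration
(arbitrary values outside `S`). -/
noncomputable def extendConfig {N : ℕ} {𝒳 : Fin N → Type*} [∀ i, Nonempty (𝒳 i)]
    (S : Finset (Fin N)) (xS : ∀ j : {j // j ∈ S}, 𝒳 j.1) : ∀ j, 𝒳 j :=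
  fun j => if h : j ∈ S then xS ⟨j, h⟩ else Classical.arbitrary (𝒳 j)

/-- Marginal of a joint pmf `P` on the coordinates in `S`. -/
noncomputable def marginal {N : ℕ} {𝒳 : Fin N → Type*} [∀ i, Fintype (𝒳 i)]
    (P : (∀ j, 𝒳 j) → ℝ) (S : Finset (Fin N)) (xS : ∀ j : {j // j ∈ S}, 𝒳 j.1) : ℝ :=
  ∑ z : ∀ j, 𝒳 j, if ∀ j : {j // j ∈ S}, z j.1 = xS j then P z else 0

section Aux
variable {N : ℕ} {𝒳 : Fin N → Type*} [∀ i, Fintype (𝒳 i)] [∀ i, Nonempty (𝒳 i)]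

lemma sumOut (i : Fin N) (F : (∀ j, 𝒳 j) → ℝ) (r : (∀ j, 𝒳 j) → 𝒳 i → ℝ)
    (hF : ∀ x a, F (Function.update x i a) = F x)
    (hr : ∀ x a, r (Function.update x i a) = r x)
    (hr1 : ∀ x, ∑ b, r x b = 1) :
    ∑ x, F x * r x (x i) = (Fintype.card (𝒳 i) : ℝ)⁻¹ * ∑ x, F x := by
  have hinv : Function.Involutive
      (fun z : ((∀ j, 𝒳 j) × 𝒳 i) => (Function.update z.1 i z.2, z.1 i)) := by
    rintro ⟨x, a⟩
    simp [Function.update_idem]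
  have key : ∑ z : ((∀ j, 𝒳 j) × 𝒳 i), F z.1 * r z.1 (z.1 i)
      = ∑ z : ((∀ j, 𝒳 j) × 𝒳 i), F z.1 * r z.1 z.2 := by
    refine Fintype.sum_bijective _ hinv.bijective _ _ ?_
    rintro ⟨x, a⟩
    simp [hF, hr]
  rw [Fintype.sum_prod_type, Fintype.sum_prod_type] at key
  have h2 : ∀ x : ∀ j, 𝒳 j, ∑ a, F x * r x a = F x := by
    intro x; rw [← Finset.mul_sum, hr1, mul_one]
  have key2 : (Fintype.card (𝒳 i) : ℝ) * ∑ x, F x * r x (x i) = ∑ x, F x := by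
    calc (Fintype.card (𝒳 i) : ℝ) * ∑ x, F x * r x (x i)
        = ∑ x : ∀ j, 𝒳 j, ∑ _a : 𝒳 i, F x * r x (x i) := by
          simp [Finset.sum_const, Finset.mul_sum, Finset.card_univ, mul_comm]
      _ = ∑ x : ∀ j, 𝒳 j, ∑ a, F x * r x a := key
      _ = ∑ x, F x := Finset.sum_congr rfl (fun x _ => h2 x)
  have hc : (Fintype.card (𝒳 i) : ℝ) ≠ 0 := Nat.cast_ne_zero.2 Fintype.card_ne_zero
  field_simp
  linarith [key2]

lemma auxSum (p : ∀ i : Fin N, (∀ j, 𝒳 j) → 𝒳 i → ℝ)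
    (hdep : ∀ (k j : Fin N) (x : ∀ m, 𝒳 m) (a : 𝒳 j), k ≤ j →
      p k (Function.update x j a) = p k x)
    (hp1 : ∀ k x, ∑ b, p k x b = 1) :
    ∀ (n t : ℕ), t + n = N → ∀ G : (∀ j, 𝒳 j) → ℝ,
      (∀ (x : ∀ m, 𝒳 m) (j : Fin N) (a : 𝒳 j), t ≤ (j : ℕ) → G (Function.update x j a) = G x) →
      ∑ x, G x * ∏ k ∈ Finset.univ.filter (fun k : Fin N => t ≤ (k : ℕ)), p k x (x k)
        = (∏ k ∈ Finset.univ.filter (fun k : Fin N => t ≤ (k : ℕ)),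
            (Fintype.card (𝒳 k) : ℝ)⁻¹) * ∑ x, G x := by
  intro n
  induction n with
  | zero =>
    intro t ht G hG
    have he : Finset.univ.filter (fun k : Fin N => t ≤ (k : ℕ)) = ∅ := by
      ext k
      simp only [Finset.mem_filter, Finset.mem_univ, true_and, Finset.notMem_empty, iff_false,
        not_le]
      have := k.isLt
      omega
    simp [he]
  | succ n ih =>
    intro t ht G hG
    have htN : t < N := by omega
    set j : Fin N := ⟨t, htN⟩ with hj
    have hsplit : Finset.univ.filter (fun k : Fin N => t ≤ (k : ℕ))
        = insert j (Finset.univ.filter (fun k : Fin N => t + 1 ≤ (k : ℕ))) := by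
      ext k
      simp only [Finset.mem_filter, Finset.mem_univ, true_and, Finset.mem_insert, Fin.ext_iff, hj]
      omega
    have hjnot : j ∉ Finset.univ.filter (fun k : Fin N => t + 1 ≤ (k : ℕ)) := by
      simp [hj]
    have hG' : ∀ (x : ∀ m, 𝒳 m) (j' : Fin N) (a : 𝒳 j'), t + 1 ≤ (j' : ℕ) →
        G (Function.update x j' a) * p j (Function.update x j' a) ((Function.update x j' a) j)
          = G x * p j x (x j) := by
      intro x j' a hj'
      have hne : j ≠ j' := by
        intro h
        have hv : (j' : ℕ) = t := by rw [← h]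
        omega
      rw [hG x j' a (by omega), hdep j j' x a (by simp [hj, Fin.le_def]; omega),
        Function.update_of_ne hne]
    calc ∑ x, G x * ∏ k ∈ Finset.univ.filter (fun k : Fin N => t ≤ (k : ℕ)), p k x (x k)
        = ∑ x, (G x * p j x (x j)) * ∏ k ∈ Finset.univ.filter (fun k : Fin N => t + 1 ≤ (k : ℕ)),
            p k x (x k) := by
          refine Finset.sum_congr rfl fun x _ => ?_
          rw [hsplit, Finset.prod_insert hjnot]
          ring
      _ = (∏ k ∈ Finset.univ.filter (fun k : Fin N => t + 1 ≤ (k : ℕ)),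
            (Fintype.card (𝒳 k) : ℝ)⁻¹) * ∑ x, G x * p j x (x j) :=
          ih (t + 1) (by omega) _ hG'
      _ = (∏ k ∈ Finset.univ.filter (fun k : Fin N => t ≤ (k : ℕ)),
            (Fintype.card (𝒳 k) : ℝ)⁻¹) * ∑ x, G x := by
          rw [sumOut j G (p j) (fun x a => hG x j a (by simp [hj]))
            (fun x a => hdep j j x a le_rfl) (hp1 j), hsplit, Finset.prod_insert hjnot]
          ring
end Aux

/-- Lemma 1 of the paper: chain rule for the divergence between two products of
conditional distributions with (possibly different) contexts `C i`, `C̄ i ⊆ {0,…,i−1}`.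
Conditional pmfs are modeled as functions of the full configuration that depend only
on the coordinates in their context set. -/
theorem divergence_chain_rule
    (N : ℕ) (hN : 2 ≤ N)
    (𝒳 : Fin N → Type*) [∀ i, Fintype (𝒳 i)] [∀ i, Nonempty (𝒳 i)]
    (C Cbar : Fin N → Finset (Fin N))
    (hC : ∀ i, ∀ j ∈ C i, j < i)
    (hCbar : ∀ i, ∀ j ∈ Cbar i, j < i)
    (p q : ∀ i : Fin N, (∀ j, 𝒳 j) → 𝒳 i → ℝ)
    (hpdep : ∀ i, ∀ x y : ∀ j, 𝒳 j, (∀ j ∈ C i, x j = y j) → p i x = p i y)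
    (hqdep : ∀ i, ∀ x y : ∀ j, 𝒳 j, (∀ j ∈ Cbar i, x j = y j) → q i x = q i y)
    (hp0 : ∀ i x xi, 0 ≤ p i x xi)
    (hp1 : ∀ i x, ∑ xi, p i x xi = 1)
    (hqpos : ∀ i x xi, 0 < q i x xi)
    (hq1 : ∀ i x, ∑ xi, q i x xi = 1) :
    klDiv (fun x : ∀ j, 𝒳 j => ∏ i, p i x (x i))
          (fun x : ∀ j, 𝒳 j => ∏ i, q i x (x i)) =
      ∑ i : Fin N, ∑ xS : ∀ j : {j // j ∈ C i ∪ Cbar i}, 𝒳 j.1,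
        marginal (fun x : ∀ j, 𝒳 j => ∏ k, p k x (x k)) (C i ∪ Cbar i) xS *
          klDiv (p i (extendConfig (C i ∪ Cbar i) xS))
                (q i (extendConfig (C i ∪ Cbar i) xS)) := by
  classical
  have hdepP : ∀ (k j : Fin N) (x : ∀ m, 𝒳 m) (a : 𝒳 j), k ≤ j →
      p k (Function.update x j a) = p k x := by
    intro k j x a hkj
    refine hpdep k _ _ fun m hm => ?_
    exact Function.update_of_ne (ne_of_lt (lt_of_lt_of_le (hC k m hm) hkj)) _ _
  have hdepQ : ∀ (k j : Fin N) (x : ∀ m, 𝒳 m) (a : 𝒳 j), k ≤ j →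
      q k (Function.update x j a) = q k x := by
    intro k j x a hkj
    refine hqdep k _ _ fun m hm => ?_
    exact Function.update_of_ne (ne_of_lt (lt_of_lt_of_le (hCbar k m hm) hkj)) _ _
  -- Step 1: chain rule for the logarithm
  have step1 : klDiv (fun x : ∀ j, 𝒳 j => ∏ i, p i x (x i))
          (fun x : ∀ j, 𝒳 j => ∏ i, q i x (x i))
      = ∑ i : Fin N, ∑ x : ∀ j, 𝒳 j,
          (∏ k, p k x (x k)) * Real.log (p i x (x i) / q i x (x i)) := by
    have hx : ∀ x : ∀ j, 𝒳 j,
        (∏ i, p i x (x i)) * Real.log ((∏ i, p i x (x i)) / (∏ i, q i x (x i)))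
          = ∑ i : Fin N, (∏ k, p k x (x k)) * Real.log (p i x (x i) / q i x (x i)) := by
      intro x
      by_cases hP : (∏ i, p i x (x i)) = 0
      · simp [hP]
      · have hpne : ∀ k : Fin N, p k x (x k) ≠ 0 :=
          fun k => Finset.prod_ne_zero_iff.mp hP k (Finset.mem_univ k)
        have hqne : ∀ k : Fin N, q k x (x k) ≠ 0 := fun k => (hqpos k x (x k)).ne'
        have hQ : (∏ i, q i x (x i)) ≠ 0 := Finset.prod_ne_zero_iff.mpr fun k _ => hqne k
        rw [Real.log_div hP hQ, Real.log_prod (fun k _ => hpne k),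
          Real.log_prod (fun k _ => hqne k), ← Finset.sum_sub_distrib, Finset.mul_sum]
        exact Finset.sum_congr rfl fun i _ => by rw [Real.log_div (hpne i) (hqne i)]
    rw [klDiv]
    calc ∑ x : ∀ j, 𝒳 j, (∏ i, p i x (x i)) * Real.log ((∏ i, p i x (x i)) / (∏ i, q i x (x i)))
        = ∑ x : ∀ j, 𝒳 j, ∑ i : Fin N,
            (∏ k, p k x (x k)) * Real.log (p i x (x i) / q i x (x i)) :=
          Finset.sum_congr rfl fun x _ => hx x
      _ = _ := Finset.sum_comm
  -- Step 3
  have step3 : ∀ i : Fin N,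
      (∑ x : ∀ j, 𝒳 j, (∏ k, p k x (x k)) * Real.log (p i x (x i) / q i x (x i)))
      = ∑ x : ∀ j, 𝒳 j, (∏ k, p k x (x k)) *
          ∑ xi, p i x xi * Real.log (p i x xi / q i x xi) := by
    intro i
    have hflt : ∀ (s : ℕ), Finset.univ.filter (fun k : Fin N => ¬ s ≤ (k : ℕ))
        = Finset.univ.filter (fun k : Fin N => (k : ℕ) < s) := by
      intro s; ext k; simp [not_le]
    have hins : Finset.univ.filter (fun k : Fin N => (i : ℕ) ≤ (k : ℕ))
        = insert i (Finset.univ.filter (fun k : Fin N => (i : ℕ) + 1 ≤ (k : ℕ))) := by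
      ext k; simp only [Finset.mem_filter, Finset.mem_univ, true_and, Finset.mem_insert,
        Fin.ext_iff]; omega
    have hinot : i ∉ Finset.univ.filter (fun k : Fin N => (i : ℕ) + 1 ≤ (k : ℕ)) := by simp
    have hins2 : Finset.univ.filter (fun k : Fin N => (k : ℕ) < (i : ℕ) + 1)
        = insert i (Finset.univ.filter (fun k : Fin N => (k : ℕ) < (i : ℕ))) := by
      ext k; simp only [Finset.mem_filter, Finset.mem_univ, true_and, Finset.mem_insert,
        Fin.ext_iff]; omega
    have hinot2 : i ∉ Finset.univ.filter (fun k : Fin N => (k : ℕ) < (i : ℕ)) := by simp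
    have hprodlt : ∀ (s : ℕ) (z : ∀ m, 𝒳 m) (j : Fin N) (a : 𝒳 j), s ≤ (j : ℕ) →
        (∏ k ∈ Finset.univ.filter (fun k : Fin N => (k : ℕ) < s),
          p k (Function.update z j a) ((Function.update z j a) k))
        = ∏ k ∈ Finset.univ.filter (fun k : Fin N => (k : ℕ) < s), p k z (z k) := by
      intro s z j a hs
      refine Finset.prod_congr rfl fun k hk => ?_
      have hk' : (k : ℕ) < s := by simpa using hk
      have hne : k ≠ j := by intro h; rw [h] at hk'; omega
      rw [hdepP k j z a (by rw [Fin.le_def]; omega), Function.update_of_ne hne]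
    have lhs1 : (∑ x : ∀ j, 𝒳 j, (∏ k, p k x (x k)) * Real.log (p i x (x i) / q i x (x i)))
        = ∑ xi : 𝒳 i, ∑ x : ∀ j, 𝒳 j,
            (if xi = x i then (∏ k, p k x (x k)) * Real.log (p i x xi / q i x xi) else 0) := by
      rw [Finset.sum_comm]
      refine Finset.sum_congr rfl fun x _ => ?_
      simp
    have rhs1 : (∑ x : ∀ j, 𝒳 j, (∏ k, p k x (x k)) *
          ∑ xi, p i x xi * Real.log (p i x xi / q i x xi))
        = ∑ xi : 𝒳 i, ∑ x : ∀ j, 𝒳 j,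
            (∏ k, p k x (x k)) * (p i x xi * Real.log (p i x xi / q i x xi)) := by
      rw [Finset.sum_comm]
      refine Finset.sum_congr rfl fun x _ => ?_
      rw [Finset.mul_sum]
    rw [lhs1, rhs1]
    refine Finset.sum_congr rfl fun xi _ => ?_
    set F : (∀ j, 𝒳 j) → ℝ := fun z => p i z xi * Real.log (p i z xi / q i z xi) *
      ∏ k ∈ Finset.univ.filter (fun k : Fin N => (k : ℕ) < (i : ℕ)), p k z (z k) with hF
    have hFinv : ∀ (z : ∀ m, 𝒳 m) (j : Fin N) (a : 𝒳 j), (i : ℕ) ≤ (j : ℕ) →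
        F (Function.update z j a) = F z := by
      intro z j a hij
      have hij' : i ≤ j := by rw [Fin.le_def]; omega
      rw [hF]
      dsimp only
      rw [hdepP i j z a hij', hdepQ i j z a hij', hprodlt (i : ℕ) z j a hij]
    have claimA : (∑ x : ∀ j, 𝒳 j,
          (if xi = x i then (∏ k, p k x (x k)) * Real.log (p i x xi / q i x xi) else 0))
        = (∏ k ∈ Finset.univ.filter (fun k : Fin N => (i : ℕ) + 1 ≤ (k : ℕ)),
            (Fintype.card (𝒳 k) : ℝ)⁻¹) * ((Fintype.card (𝒳 i) : ℝ)⁻¹ * ∑ z, F z) := by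
      have e1 : ∀ x : ∀ j, 𝒳 j,
          (if xi = x i then (∏ k, p k x (x k)) * Real.log (p i x xi / q i x xi) else 0)
          = ((if xi = x i then Real.log (p i x xi / q i x xi) else 0) *
              ∏ k ∈ Finset.univ.filter (fun k : Fin N => (k : ℕ) < (i : ℕ) + 1), p k x (x k)) *
            ∏ k ∈ Finset.univ.filter (fun k : Fin N => (i : ℕ) + 1 ≤ (k : ℕ)), p k x (x k) := by
        intro x
        rw [← Finset.prod_filter_mul_prod_filter_not Finset.univ
          (fun k : Fin N => (i : ℕ) + 1 ≤ (k : ℕ)), hflt ((i : ℕ) + 1)]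
        split_ifs <;> ring
      rw [Finset.sum_congr rfl fun x _ => e1 x]
      have hG1 : ∀ (x : ∀ m, 𝒳 m) (j : Fin N) (a : 𝒳 j), (i : ℕ) + 1 ≤ (j : ℕ) →
          ((if xi = (Function.update x j a) i then
              Real.log (p i (Function.update x j a) xi / q i (Function.update x j a) xi) else 0) *
            ∏ k ∈ Finset.univ.filter (fun k : Fin N => (k : ℕ) < (i : ℕ) + 1),
              p k (Function.update x j a) ((Function.update x j a) k))
          = (if xi = x i then Real.log (p i x xi / q i x xi) else 0) *
            ∏ k ∈ Finset.univ.filter (fun k : Fin N => (k : ℕ) < (i : ℕ) + 1), p k x (x k) := by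
        intro x j a hj
        have hij' : i ≤ j := by rw [Fin.le_def]; omega
        have hne : i ≠ j := by intro h; subst h; omega
        rw [Function.update_of_ne hne, hdepP i j x a hij', hdepQ i j x a hij',
          hprodlt ((i : ℕ) + 1) x j a hj]
      rw [auxSum p hdepP hp1 (N - ((i : ℕ) + 1)) ((i : ℕ) + 1) (by have := i.isLt; omega) _ hG1]
      congr 1
      have e2 : ∀ x : ∀ j, 𝒳 j,
          (if xi = x i then Real.log (p i x xi / q i x xi) else 0) *
            ∏ k ∈ Finset.univ.filter (fun k : Fin N => (k : ℕ) < (i : ℕ) + 1), p k x (x k)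
          = F x * (if xi = x i then (1 : ℝ) else 0) := by
        intro x
        rw [hins2, Finset.prod_insert hinot2, hF]
        dsimp only
        split_ifs with h
        · rw [← h]; ring
        · ring
      rw [Finset.sum_congr rfl fun x _ => e2 x]
      exact sumOut i F (fun z b => if xi = b then 1 else 0)
        (fun z a => hFinv z i a le_rfl) (fun z a => rfl) (fun z => by simp)
    have claimB : (∑ x : ∀ j, 𝒳 j,
          (∏ k, p k x (x k)) * (p i x xi * Real.log (p i x xi / q i x xi)))
        = (∏ k ∈ Finset.univ.filter (fun k : Fin N => (i : ℕ) ≤ (k : ℕ)),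
            (Fintype.card (𝒳 k) : ℝ)⁻¹) * ∑ z, F z := by
      have e1 : ∀ x : ∀ j, 𝒳 j,
          (∏ k, p k x (x k)) * (p i x xi * Real.log (p i x xi / q i x xi))
          = F x * ∏ k ∈ Finset.univ.filter (fun k : Fin N => (i : ℕ) ≤ (k : ℕ)), p k x (x k) := by
        intro x
        rw [← Finset.prod_filter_mul_prod_filter_not Finset.univ
          (fun k : Fin N => (i : ℕ) ≤ (k : ℕ)), hflt (i : ℕ), hF]
        dsimp only
        ring
      rw [Finset.sum_congr rfl fun x _ => e1 x]
      exact auxSum p hdepP hp1 (N - (i : ℕ)) (i : ℕ) (by have := i.isLt; omega) F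
        (fun x j a hj => hFinv x j a hj)
    rw [claimA, claimB, hins, Finset.prod_insert hinot]
    ring
  -- Step 2
  have step2 : ∀ i : Fin N,
      (∑ xS : ∀ j : {j // j ∈ C i ∪ Cbar i}, 𝒳 j.1,
        marginal (fun x : ∀ j, 𝒳 j => ∏ k, p k x (x k)) (C i ∪ Cbar i) xS *
          klDiv (p i (extendConfig (C i ∪ Cbar i) xS)) (q i (extendConfig (C i ∪ Cbar i) xS)))
      = ∑ x : ∀ j, 𝒳 j, (∏ k, p k x (x k)) *
          ∑ xi, p i x xi * Real.log (p i x xi / q i x xi) := by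
    intro i
    simp only [marginal, Finset.sum_mul, ite_mul, zero_mul]
    rw [Finset.sum_comm]
    refine Finset.sum_congr rfl fun z _ => ?_
    refine (Finset.sum_eq_single (fun j : {j // j ∈ C i ∪ Cbar i} => z j.1) ?_ ?_).trans ?_
    · intro b _ hb
      rw [if_neg]
      intro hcond
      exact hb (funext fun j => (hcond j).symm)
    · intro h; exact absurd (Finset.mem_univ _) h
    · rw [if_pos (fun j => rfl)]
      have hpz : p i (extendConfig (C i ∪ Cbar i) (fun j => z j.1)) = p i z := by
        refine hpdep i _ _ fun m hm => ?_
        simp [extendConfig, hm]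
      have hqz : q i (extendConfig (C i ∪ Cbar i) (fun j => z j.1)) = q i z := by
        refine hqdep i _ _ fun m hm => ?_
        simp [extendConfig, hm]
      rw [klDiv, hpz, hqz]
  rw [step1]
  exact Finset.sum_congr rfl fun i _ => (step3 i).trans (step2 i).symm
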